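/- Let Y be a finite set, π a strictly positive probability distribution on Y with π_min = min_y π(y), and let 0 < ε < π_min. For any probability distributions P₁, P₂ and Q on Y with Q(y) ∈ [π(y)−ε, π(y)+ε] for all y and P₁, P₂ strictly positive, we have D(P₂‖Q) − D(P₁‖Q) ≤ D(P₂‖π) − D(P₁‖π) + 2ε/(π_min − ε). -/
import Mathlib


def IsPMF {Y : Type*} [Fintype Y] (p : Y → ℝ) : Prop :=
  (∀ y, 0 ≤ p y) ∧ ∑ y, p y = 1

/-- Kullback–Leibler divergence with natural logarithm, convention `0 log 0 = 0`. -/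
noncomputable def KLn {Y : Type*} [Fintype Y] (Q P : Y → ℝ) : ℝ :=
  ∑ y, Q y * Real.log (Q y / P y)

/-- Stability of divergence differences when the reference distribution `Q` is
within an `ℓ∞`-ball of radius `ε < π_min` around `π`. -/
theorem KL_diff_stability {Y : Type*} [Fintype Y] [Nonempty Y]
    (π Q P₁ P₂ : Y → ℝ)
    (hπ : IsPMF π) (hQ : IsPMF Q) (hP₁ : IsPMF P₁) (hP₂ : IsPMF P₂)
    (hπpos : ∀ y, 0 < π y)
    (hP₁pos : ∀ y, 0 < P₁ y) (hP₂pos : ∀ y, 0 < P₂ y)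
    (ε : ℝ) (hε : 0 < ε)
    (hεlt : ε < Finset.univ.inf' Finset.univ_nonempty π)
    (hQball : ∀ y, |Q y - π y| ≤ ε) :
    KLn P₂ Q - KLn P₁ Q ≤ KLn P₂ π - KLn P₁ π +
      2 * ε / (Finset.univ.inf' Finset.univ_nonempty π - ε) := by
  set m := Finset.univ.inf' Finset.univ_nonempty π with hmdef
  have hm : ∀ y, m ≤ π y := fun y => Finset.inf'_le _ (Finset.mem_univ y)
  have hmε : 0 < m - ε := by linarith
  have hQpos : ∀ y, 0 < Q y := by
    intro y
    have := (abs_le.mp (hQball y)).1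
    have := hm y
    linarith
  have hQlb : ∀ y, m - ε ≤ Q y := by
    intro y
    have := (abs_le.mp (hQball y)).1
    have := hm y
    linarith
  set c : ℝ := ε / (m - ε) with hcdef
  -- pointwise bounds on log (π y / Q y)
  have hub : ∀ y, Real.log (π y / Q y) ≤ c := by
    intro y
    have h1 : Real.log (π y / Q y) ≤ π y / Q y - 1 :=
      Real.log_le_sub_one_of_pos (div_pos (hπpos y) (hQpos y))
    have h2 : π y / Q y - 1 = (π y - Q y) / Q y := by
      rw [sub_div, div_self (hQpos y).ne']
    have h3 : (π y - Q y) / Q y ≤ c := by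
      rw [hcdef]
      exact div_le_div₀ hε.le (by have := (abs_le.mp (hQball y)).1; linarith) hmε (hQlb y)
    linarith [h2 ▸ h1]
  have hlb : ∀ y, -c ≤ Real.log (π y / Q y) := by
    intro y
    have h1 : Real.log (Q y / π y) ≤ Q y / π y - 1 :=
      Real.log_le_sub_one_of_pos (div_pos (hQpos y) (hπpos y))
    have h2 : Q y / π y - 1 = (Q y - π y) / π y := by
      rw [sub_div, div_self (hπpos y).ne']
    have h3 : (Q y - π y) / π y ≤ c := by
      rw [hcdef]
      exact div_le_div₀ hε.le (by have := (abs_le.mp (hQball y)).2; linarith) hmε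
        (by have := hm y; linarith)
    have h4 : Real.log (Q y / π y) = - Real.log (π y / Q y) := by
      rw [← Real.log_inv]
      congr 1
      field_simp
    linarith [h2 ▸ h1, h4 ▸ h1]
  -- difference identity
  have key : ∀ P : Y → ℝ, (∀ y, 0 < P y) →
      KLn P Q - KLn P π = ∑ y, P y * Real.log (π y / Q y) := by
    intro P hP
    rw [KLn, KLn, ← Finset.sum_sub_distrib]
    refine Finset.sum_congr rfl fun y _ => ?_
    rw [← mul_sub]
    congr 1
    rw [Real.log_div (hP y).ne' (hQpos y).ne', Real.log_div (hP y).ne' (hπpos y).ne',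
      Real.log_div (hπpos y).ne' (hQpos y).ne']
    ring
  have k2 := key P₂ hP₂pos
  have k1 := key P₁ hP₁pos
  have hs2 : ∑ y, P₂ y * Real.log (π y / Q y) ≤ c := by
    calc ∑ y, P₂ y * Real.log (π y / Q y) ≤ ∑ y, P₂ y * c :=
          Finset.sum_le_sum fun y _ => mul_le_mul_of_nonneg_left (hub y) (hP₂pos y).le
      _ = c := by rw [← Finset.sum_mul, hP₂.2, one_mul]
  have hs1 : -c ≤ ∑ y, P₁ y * Real.log (π y / Q y) := by
    calc (-c : ℝ) = ∑ y, P₁ y * (-c) := by rw [← Finset.sum_mul, hP₁.2, one_mul]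
      _ ≤ ∑ y, P₁ y * Real.log (π y / Q y) :=
          Finset.sum_le_sum fun y _ => mul_le_mul_of_nonneg_left (hlb y) (hP₁pos y).le
  have : 2 * ε / (m - ε) = c + c := by rw [hcdef]; ring
  linarith
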